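/- Define K⁰_inv = {(t, v, x) ∈ ℝ × ℝ_{>0} × ℝ^n_{>0} : v² ∑_{i=1}^n 1/x_i ≤ t}. Then the closure of K⁰_inv in ℝ^{n+2} equals K⁰_inv ∪ (ℝ_{≥0} × {0} × ℝ^n_{≥0}). -/

import Mathlib

open Finset Filter Topology

/-- Let
`K⁰_inv = {(t, v, x) ∈ ℝ × ℝ_{>0} × ℝⁿ_{>0} : v² ∑ᵢ 1/xᵢ ≤ t}`.
Its closure in `ℝ^{n+2}` equals `K⁰_inv ∪ (ℝ_{≥0} × {0} × ℝⁿ_{≥0})`. -/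
theorem stmt5 (n : ℕ) :
    closure {p : ℝ × ℝ × (Fin n → ℝ) |
        0 < p.2.1 ∧ (∀ i, 0 < p.2.2 i) ∧ p.2.1 ^ 2 * ∑ i, (p.2.2 i)⁻¹ ≤ p.1} =
    {p : ℝ × ℝ × (Fin n → ℝ) |
        0 < p.2.1 ∧ (∀ i, 0 < p.2.2 i) ∧ p.2.1 ^ 2 * ∑ i, (p.2.2 i)⁻¹ ≤ p.1} ∪
    {p : ℝ × ℝ × (Fin n → ℝ) | 0 ≤ p.1 ∧ p.2.1 = 0 ∧ ∀ i, 0 ≤ p.2.2 i} := by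
  set S : Set (ℝ × ℝ × (Fin n → ℝ)) := {p |
        0 < p.2.1 ∧ (∀ i, 0 < p.2.2 i) ∧ p.2.1 ^ 2 * ∑ i, (p.2.2 i)⁻¹ ≤ p.1} with hS
  apply Set.Subset.antisymm
  · -- closure S ⊆ S ∪ B
    intro p hp
    obtain ⟨u, hu, hlim⟩ := mem_closure_iff_seq_limit.1 hp
    obtain ⟨t, v, x⟩ := p
    have ht : Tendsto (fun k => (u k).1) atTop (𝓝 t) :=
      (continuous_fst.tendsto _).comp hlim
    have hv : Tendsto (fun k => (u k).2.1) atTop (𝓝 v) :=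
      ((continuous_fst.comp continuous_snd).tendsto _).comp hlim
    have hx : ∀ i, Tendsto (fun k => (u k).2.2 i) atTop (𝓝 (x i)) := by
      intro i
      exact (((continuous_apply i).comp (continuous_snd.comp continuous_snd)).tendsto _).comp hlim
    have hv0 : 0 ≤ v := ge_of_tendsto' hv fun k => (hu k).1.le
    have hx0 : ∀ i, 0 ≤ x i := fun i => ge_of_tendsto' (hx i) fun k => ((hu k).2.1 i).le
    rcases hv0.lt_or_eq with hvpos | hveq
    · -- v > 0 case
      by_cases hxall : ∀ i, 0 < x i
      · left
        refine ⟨hvpos, hxall, ?_⟩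
        have : Tendsto (fun k => (u k).2.1 ^ 2 * ∑ i, ((u k).2.2 i)⁻¹) atTop
            (𝓝 (v ^ 2 * ∑ i, (x i)⁻¹)) := by
          exact (hv.pow 2).mul (tendsto_finset_sum _ fun i _ => (hx i).inv₀ (hxall i).ne')
        exact le_of_tendsto_of_tendsto' this ht fun k => (hu k).2.2
      · -- some x i = 0 : contradiction
        exfalso
        push_neg at hxall
        obtain ⟨i, hi⟩ := hxall
        have hxi : x i = 0 := le_antisymm hi (hx0 i)
        have hx' : Tendsto (fun k => (u k).2.2 i) atTop (𝓝 0) := hxi ▸ hx i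
        have hinv : Tendsto (fun k => ((u k).2.2 i)⁻¹) atTop atTop :=
          tendsto_inv_nhdsGT_zero.comp
            (tendsto_nhdsWithin_of_tendsto_nhds_of_eventually_within _ hx'
              (Eventually.of_forall fun k => (hu k).2.1 i))
        have hblow : Tendsto (fun k => (u k).2.1 ^ 2 * ((u k).2.2 i)⁻¹) atTop atTop :=
          Tendsto.pos_mul_atTop (by positivity : (0:ℝ) < v ^ 2) (hv.pow 2) hinv
        have hle : ∀ k, (u k).2.1 ^ 2 * ((u k).2.2 i)⁻¹ ≤ (u k).1 := by
          intro k
          refine le_trans ?_ (hu k).2.2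
          apply mul_le_mul_of_nonneg_left _ (sq_nonneg _)
          exact Finset.single_le_sum (fun j _ => (inv_nonneg.2 ((hu k).2.1 j).le))
            (Finset.mem_univ i)
        exact not_tendsto_atTop_of_tendsto_nhds ht (tendsto_atTop_mono hle hblow)
    · right
      refine ⟨?_, hveq.symm, hx0⟩
      refine le_of_tendsto_of_tendsto' tendsto_const_nhds ht fun k => ?_
      refine le_trans ?_ (hu k).2.2
      exact mul_nonneg (sq_nonneg _)
        (Finset.sum_nonneg fun i _ => inv_nonneg.2 ((hu k).2.1 i).le)
  · rintro p (hp | hp)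
    · exact subset_closure hp
    · obtain ⟨t, v, x⟩ := p
      obtain ⟨ht0, hv0, hx0⟩ := hp
      simp only at hv0 ht0 hx0
      subst hv0
      set ε : ℕ → ℝ := fun k => ((k : ℝ) + 1)⁻¹ with hε
      have hεpos : ∀ k, 0 < ε k := by intro k; positivity
      have hεlim : Tendsto ε atTop (𝓝 0) := by
        apply tendsto_inv_atTop_zero.comp
        exact tendsto_atTop_add_const_right _ 1 tendsto_natCast_atTop_atTop
      set u : ℕ → ℝ × ℝ × (Fin n → ℝ) := fun k =>
        (t + (ε k) ^ 2 * ∑ i, (x i + ε k)⁻¹, ε k, fun i => x i + ε k) with hu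
      have hsum : Tendsto (fun k => (ε k) ^ 2 * ∑ i, (x i + ε k)⁻¹) atTop (𝓝 0) := by
        apply squeeze_zero (fun k => mul_nonneg (sq_nonneg _)
          (Finset.sum_nonneg fun i _ => inv_nonneg.2 (add_nonneg (hx0 i) (hεpos k).le))) (g := fun k => n * ε k)
        · intro k
          calc (ε k) ^ 2 * ∑ i, (x i + ε k)⁻¹
              ≤ (ε k) ^ 2 * ∑ i : Fin n, (ε k)⁻¹ := by
                apply mul_le_mul_of_nonneg_left _ (by positivity)
                apply Finset.sum_le_sum
                intro i _
                exact inv_anti₀ (hεpos k) (le_add_of_nonneg_left (hx0 i))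
            _ = n * ε k := by
                rw [Finset.sum_const, Finset.card_univ, Fintype.card_fin]
                field_simp
                rw [nsmul_eq_mul, one_div, mul_comm (n:ℝ), sq, mul_assoc, mul_inv_cancel_left₀ (hεpos k).ne']
        · simpa using tendsto_const_nhds.mul hεlim
      have h1 : Tendsto (fun k => (u k).1) atTop (𝓝 t) := by
        simpa using tendsto_const_nhds.add hsum
      have h3 : Tendsto (fun k => (u k).2.2) atTop (𝓝 x) := by
        rw [tendsto_pi_nhds]
        intro i
        simpa using tendsto_const_nhds.add hεlim
      have hT : Tendsto u atTop (𝓝 (t, 0, x)) := h1.prodMk_nhds (hεlim.prodMk_nhds h3)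
      refine mem_closure_of_tendsto hT (Eventually.of_forall fun k => ?_)
      exact ⟨hεpos k, fun i => add_pos_of_nonneg_of_pos (hx0 i) (hεpos k), le_add_of_nonneg_left ht0⟩
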